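/- Let n, k, q, r be positive integers with k odd, 2n = k·q + r, 0 ≤ r < k, and r even. Define the cyclic sequence of length k consisting of r/2 copies of q+1, followed by (k−r−1)/2 copies of q, followed by r/2 copies of q+1, followed by (k−r+1)/2 copies of q. Then no set of cyclically consecutive entries of this sequence sums to exactly n. -/
import Mathlib

private def cnt (u0 m1 j : ℕ) : ℕ :=
  min j u0 + (min j (u0 + u0 + m1) - min j (u0 + m1))

private lemma cnt_A (u0 m1 u v : ℕ)
    (h : cnt u0 m1 u + u0 < cnt u0 m1 v) :
    cnt u0 m1 v + m1 ≤ cnt u0 m1 u + (v - u) := by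
  unfold cnt at *; omega

private lemma cnt_B (u0 m1 u v : ℕ) (huv : u ≤ v) (hv : v ≤ 2*u0+2*m1+1)
    (h : cnt u0 m1 v < cnt u0 m1 u + u0) :
    cnt u0 m1 u + (v - u) + 2*u0 + m1 ≤ (2*u0+2*m1+1) + cnt u0 m1 v := by
  unfold cnt at *; omega

private lemma cnt_step (u0 m1 j : ℕ) :
    cnt u0 m1 (j+1) = cnt u0 m1 j +
      (if j < u0 then 1 else if j < u0 + m1 then 0
       else if j < u0 + u0 + m1 then 1 else 0) := by
  unfold cnt; split_ifs <;> omega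

private lemma cnt_mono (u0 m1 u v : ℕ) (huv : u ≤ v) :
    cnt u0 m1 u ≤ cnt u0 m1 v := by
  unfold cnt; omega

private lemma sum_range_add' (f : ℕ → ℕ) (m n : ℕ) :
    ∑ i ∈ Finset.range (m+n), f i
      = (∑ i ∈ Finset.range m, f i) + ∑ t ∈ Finset.range n, f (m+t) := by
  induction n with
  | zero => simp
  | succ n ih => rw [← add_assoc, Finset.sum_range_succ, Finset.sum_range_succ, ih, add_assoc]

private lemma partial_sum (q u0 m1 : ℕ) (a : ℕ → ℕ)
    (ha : ∀ i, a i = if i < u0 then q + 1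
      else if i < u0 + m1 then q
      else if i < u0 + u0 + m1 then q + 1 else q) :
    ∀ j, ∑ i ∈ Finset.range j, a i = j*q + cnt u0 m1 j := by
  intro j
  induction j with
  | zero => simp [cnt]
  | succ j ih =>
    rw [Finset.sum_range_succ, ih, ha j, cnt_step,
      show (j+1)*q = j*q + q from by ring]
    split_ifs <;> omega

private lemma core_lemma (n k q q' u0 m1 : ℕ) (hq'0 : 0 < q') (hq' : q = q' + q')
    (hm1 : k = 2*u0 + 2*m1 + 1) (h2n : 2 * n = k * q + (u0 + u0)) :
    ∀ u v : ℕ, u < v → v ≤ k → v - u < k →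
      v*q + cnt u0 m1 v = u*q + cnt u0 m1 u + n → False := by
  intro u v huv hvk hd heqc
  set d := v - u with hdd
  have hBAD : v*q = u*q + d*q := by
    rw [show v = u + d from by omega, add_mul]
  rw [hBAD] at heqc
  have heqc2 : 2*(u*q) + 2*(d*q) + 2*(cnt u0 m1 v)
      = 2*(u*q) + 2*(cnt u0 m1 u) + 2*n := by
    have h := congrArg (fun x => 2*x) heqc
    simp only [mul_add] at h
    omega
  rcases lt_trichotomy (2*d) k with hlt | heqd | hgt
  · set e := k - 2*d with he
    have hEe : e ≤ e * q' := by
      calc e = e*1 := (mul_one e).symm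
      _ ≤ e*q' := Nat.mul_le_mul_left e hq'0
    have hkq : k*q = 2*(d*q) + 2*(e*q') := by
      rw [show k = 2*d + e from by omega, hq']; ring
    have hkey : cnt u0 m1 v = cnt u0 m1 u + e*q' + u0 := by omega
    have hA2 := cnt_A u0 m1 u v (by omega)
    omega
  · omega
  · set e := 2*d - k with he
    have hEe : e ≤ e * q' := by
      calc e = e*1 := (mul_one e).symm
      _ ≤ e*q' := Nat.mul_le_mul_left e hq'0
    have hkq : 2*(d*q) = k*q + 2*(e*q') := by
      have h1 : 2*(d*q) = (2*d)*q := by ring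
      rw [h1, show 2*d = k + e from by omega, hq']; ring
    have hkey : cnt u0 m1 v + e*q' = cnt u0 m1 u + u0 := by omega
    have hB2 := cnt_B u0 m1 u v (by omega) (by omega) (by omega)
    omega

set_option maxHeartbeats 1000000 in
theorem stmt_7 (n k q r : ℕ) (hn : 0 < n) (hq : 0 < q) (hr0 : 0 < r)
    (hk : Odd k) (h2n : 2 * n = k * q + r) (hr : r < k) (hre : Even r)
    (a : ℕ → ℕ)
    (ha : ∀ i, a i =
      if i < r / 2 then q + 1
      else if i < r / 2 + (k - r - 1) / 2 then q
      else if i < r + (k - r - 1) / 2 then q + 1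
      else q) :
    ∀ s len, 0 < len → len < k →
      (∑ t ∈ Finset.range len, a ((s + t) % k)) ≠ n := by
  intro s len hlen hlenk heq
  obtain ⟨t0, ht0⟩ := hk
  obtain ⟨u0, hu0⟩ := hre
  have hk0 : 0 < k := by omega
  obtain ⟨m1, hm1⟩ : ∃ m1, k = 2*u0 + 2*m1 + 1 := ⟨t0 - u0, by omega⟩
  have ha' : ∀ i, a i =
      if i < u0 then q + 1
      else if i < u0 + m1 then q
      else if i < u0 + u0 + m1 then q + 1
      else q := by
    intro i
    rw [ha i, show (k-r-1)/2 = m1 from by omega, show r/2 = u0 from by omega, hu0]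
  -- q must be even
  rcases Nat.even_or_odd q with ⟨q', hq'⟩ | hoq
  swap
  · obtain ⟨w, hw⟩ : Odd (k * q) := (Nat.odd_iff.mpr (by omega)).mul hoq
    omega
  have hq'0 : 0 < q' := by omega
  have hS := partial_sum q u0 m1 a ha'
  have core := core_lemma n k q q' u0 m1 hq'0 hq' hm1 (by omega)
  -- reduce the cyclic window sum to partial sums
  have hmod : ∀ t, (s + t) % k = (s % k + t) % k := by
    intro t
    conv_lhs => rw [Nat.add_mod]
    conv_rhs => rw [Nat.add_mod]
    rw [Nat.mod_mod_of_dvd _ dvd_rfl]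
  simp only [hmod] at heq
  set s' := s % k with hs'
  have hs'k : s' < k := Nat.mod_lt _ hk0
  by_cases hc : s' + len ≤ k
  · -- no wrap
    have h1 : ∑ t ∈ Finset.range len, a ((s' + t) % k)
        = ∑ t ∈ Finset.range len, a (s' + t) := by
      refine Finset.sum_congr rfl (fun t ht => ?_)
      rw [Nat.mod_eq_of_lt (by have := Finset.mem_range.mp ht; omega)]
    rw [h1] at heq
    have h2 := sum_range_add' a s' len
    rw [hS (s' + len), hS s', heq] at h2
    exact core s' (s' + len) (by omega) hc (by omega) h2
  · -- wrap around
    set b := s' + len - k with hb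
    have hbk : b < s' := by omega
    have hsplit : len = (k - s') + b := by omega
    rw [hsplit, sum_range_add'] at heq
    have h1 : ∑ t ∈ Finset.range (k - s'), a ((s' + t) % k)
        = ∑ t ∈ Finset.range (k - s'), a (s' + t) := by
      refine Finset.sum_congr rfl (fun t ht => ?_)
      rw [Nat.mod_eq_of_lt (by have := Finset.mem_range.mp ht; omega)]
    have h2 : ∑ t ∈ Finset.range b, a ((s' + ((k - s') + t)) % k)
        = ∑ t ∈ Finset.range b, a t := by
      refine Finset.sum_congr rfl (fun t ht => ?_)
      have ht' := Finset.mem_range.mp ht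
      rw [show s' + ((k - s') + t) = k + t from by omega, Nat.add_mod_left,
        Nat.mod_eq_of_lt (by omega)]
    rw [h1, h2] at heq
    have h3 := sum_range_add' a s' (k - s')
    rw [show s' + (k - s') = k from by omega] at h3
    have hSk : ∑ i ∈ Finset.range k, a i = 2*n := by
      rw [hS k]
      have hCk : cnt u0 m1 k = r := by unfold cnt; omega
      omega
    rw [hSk, hS s'] at h3
    rw [hS b] at heq
    have hfin : s'*q + cnt u0 m1 s' = b*q + cnt u0 m1 b + n := by omega
    exact core b s' hbk (by omega) (by omega) hfin
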